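/- Let n ≥ 1 and m ≥ 3 be integers and let N be a smooth m-vector field on ℝ^n. If the induced m-ary bracket {f₁, …, f_m}(x) = N_x(df₁(x), …, df_m(x)) satisfies the fundamental identity for all smooth functions (i.e. N is a Nambu–Poisson tensor of order m ≥ 3), then this bracket satisfies the generalized Jacobi identity of order m (i.e. N is a generalized Poisson tensor). -/

import Mathlib

/-- The `m`-ary bracket induced by an `m`-vector field `N` on `ℝⁿ` (an assignment of an
alternating `m`-linear form on the dual space to each point):
`{f₁, …, f_m}(x) = N_x(df₁(x), …, df_m(x))`. -/
noncomputable def mvBracket {n m : ℕ}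
    (N : (Fin n → ℝ) → (((Fin n → ℝ) →L[ℝ] ℝ) [⋀^Fin m]→ₗ[ℝ] ℝ))
    (f : Fin m → ((Fin n → ℝ) → ℝ)) : (Fin n → ℝ) → ℝ :=
  fun x => N x (fun i => fderiv ℝ (f i) x)

/-- The generalized Jacobi identity of order `m` for an `m`-ary bracket `B` on smooth
functions on `ℝⁿ`. -/
def GJI (n m : ℕ) (B : (Fin m → ((Fin n → ℝ) → ℝ)) → ((Fin n → ℝ) → ℝ)) : Prop :=
  ∀ f : Fin (2 * m - 1) → ((Fin n → ℝ) → ℝ), (∀ i, ContDiff ℝ (⊤ : ℕ∞) (f i)) →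
    ∀ x, (∑ σ : Equiv.Perm (Fin (2 * m - 1)),
      ((Equiv.Perm.sign σ : ℤ) : ℝ) *
        B (fun i : Fin m =>
            if _hi : (i : ℕ) = 0 then
              B (fun k : Fin m => f (σ ⟨(k : ℕ), lt_of_lt_of_le k.isLt (by omega)⟩))
            else f (σ ⟨m - 1 + (i : ℕ), by have hi := i.isLt; omega⟩)) x) = 0

open Equiv Equiv.Perm Finset

private lemma cr_val {K : ℕ} (c y : Fin K) :
    ((Fin.cycleRange c y : Fin K) : ℕ) =
      if (y:ℕ) < (c:ℕ) then (y:ℕ)+1 else if (y:ℕ) = (c:ℕ) then 0 else (y:ℕ) := by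
  match K with
  | 0 => exact y.elim0
  | K+1 =>
    rcases lt_trichotomy y c with h | h | h
    · rw [if_pos (by exact_mod_cast h)]
      exact Fin.coe_cycleRange_of_lt h
    · subst h
      simp [Fin.cycleRange_self]
    · rw [if_neg (by simpa using not_lt.2 h.le), if_neg (fun hy => absurd (Fin.ext hy) h.ne'),
        Fin.cycleRange_of_gt h]

private lemma revConj_apply {K : ℕ} (c y t : Fin K)
    (h : Fin.cycleRange c t.rev = y.rev) :
    ((Fin.revPerm * (Fin.cycleRange c)⁻¹ * Fin.revPerm : Equiv.Perm (Fin K))) y = t := by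
  have h2 : (Fin.cycleRange c)⁻¹ (Fin.rev y) = Fin.rev t := by
    rw [← h]; exact Equiv.symm_apply_apply _ _
  simp [Equiv.Perm.mul_apply, h2, Fin.rev_rev]

private lemma mv_perm {n m : ℕ}
    (N : (Fin n → ℝ) → (((Fin n → ℝ) →L[ℝ] ℝ) [⋀^Fin m]→ₗ[ℝ] ℝ))
    (g : Fin m → ((Fin n → ℝ) → ℝ)) (c : Equiv.Perm (Fin m)) (x : Fin n → ℝ) :
    mvBracket N (g ∘ ⇑c) x = ((Equiv.Perm.sign c : ℤ) : ℝ) * mvBracket N g x := by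
  have h := AlternatingMap.map_perm (N x) (fun i => fderiv ℝ (g i) x) c
  show (N x) ((fun i => fderiv ℝ (g i) x) ∘ ⇑c) = _
  rw [h, Units.smul_def, zsmul_eq_mul]
  rfl

private lemma sum_step {n m K : ℕ}
    (N : (Fin n → ℝ) → (((Fin n → ℝ) →L[ℝ] ℝ) [⋀^Fin m]→ₗ[ℝ] ℝ)) (x : Fin n → ℝ)
    (A W : Equiv.Perm (Fin K) → Fin m → ((Fin n → ℝ) → ℝ))
    (ρ : Equiv.Perm (Fin K)) (d : Equiv.Perm (Fin m))
    (hA : ∀ σ, A σ = W (σ * ρ) ∘ ⇑d) :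
    ∑ σ : Equiv.Perm (Fin K), ((Equiv.Perm.sign σ : ℤ) : ℝ) * mvBracket N (A σ) x
      = (((Equiv.Perm.sign ρ : ℤ) : ℝ) * ((Equiv.Perm.sign d : ℤ) : ℝ)) *
        ∑ τ : Equiv.Perm (Fin K), ((Equiv.Perm.sign τ : ℤ) : ℝ) * mvBracket N (W τ) x := by
  have step1 : ∀ σ : Equiv.Perm (Fin K),
      ((Equiv.Perm.sign σ : ℤ) : ℝ) * mvBracket N (A σ) x
        = (fun τ => ((Equiv.Perm.sign (τ * ρ⁻¹) : ℤ) : ℝ) *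
            (((Equiv.Perm.sign d : ℤ) : ℝ) * mvBracket N (W τ) x)) ((Equiv.mulRight ρ) σ) := by
    intro σ
    simp only [Equiv.coe_mulRight, mul_inv_cancel_right]
    rw [hA, mv_perm]
  calc ∑ σ : Equiv.Perm (Fin K), ((Equiv.Perm.sign σ : ℤ) : ℝ) * mvBracket N (A σ) x
      = ∑ σ : Equiv.Perm (Fin K), (fun τ => ((Equiv.Perm.sign (τ * ρ⁻¹) : ℤ) : ℝ) *
            (((Equiv.Perm.sign d : ℤ) : ℝ) * mvBracket N (W τ) x)) ((Equiv.mulRight ρ) σ) :=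
        Finset.sum_congr rfl (fun σ _ => step1 σ)
    _ = ∑ τ : Equiv.Perm (Fin K), ((Equiv.Perm.sign (τ * ρ⁻¹) : ℤ) : ℝ) *
            (((Equiv.Perm.sign d : ℤ) : ℝ) * mvBracket N (W τ) x) :=
        Equiv.sum_comp (Equiv.mulRight ρ) (fun τ => ((Equiv.Perm.sign (τ * ρ⁻¹) : ℤ) : ℝ) *
            (((Equiv.Perm.sign d : ℤ) : ℝ) * mvBracket N (W τ) x))
    _ = _ := by
        rw [Finset.mul_sum]
        refine Finset.sum_congr rfl fun τ _ => ?_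
        rw [Equiv.Perm.sign_mul, Equiv.Perm.sign_inv]
        push_cast
        ring

private lemma rot_pow {K : ℕ} (hK : 1 ≤ K) :
    ∀ (k : ℕ), k ≤ K → ∀ y : Fin K,
      (((Fin.cycleRange (⟨K-1, by omega⟩ : Fin K))^k) y : ℕ)
        = if (y:ℕ)+k < K then (y:ℕ)+k else (y:ℕ)+k-K := by
  intro k
  induction k with
  | zero =>
    intro _ y
    have := y.2
    simp only [pow_zero, Equiv.Perm.coe_one, id_eq]
    rw [if_pos (by omega)]
    omega
  | succ k ih =>
    intro hk y
    have hy := y.2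
    rw [pow_succ, Equiv.Perm.mul_apply]
    have h1 := ih (by omega) ((Fin.cycleRange (⟨K-1, by omega⟩ : Fin K)) y)
    have hval : (((Fin.cycleRange (⟨K-1, by omega⟩ : Fin K)) y : Fin K) : ℕ)
        = if (y:ℕ) < K-1 then (y:ℕ)+1 else 0 := by
      rw [cr_val]
      simp only [Fin.val_mk]
      split_ifs <;> omega
    rw [h1, hval]
    split_ifs <;> omega
private noncomputable def Wfun (n m : ℕ)
    (N : (Fin n → ℝ) → (((Fin n → ℝ) →L[ℝ] ℝ) [⋀^Fin m]→ₗ[ℝ] ℝ))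
    (f : Fin (2 * m - 1) → ((Fin n → ℝ) → ℝ))
    (τ : Equiv.Perm (Fin (2 * m - 1))) (i : Fin m) : (Fin n → ℝ) → ℝ :=
  if (i : ℕ) = 0 then
    mvBracket N (fun k : Fin m => f (τ ⟨m - 1 + (k : ℕ), by have := k.2; omega⟩))
  else f (τ ⟨(i : ℕ) - 1, by have := i.2; omega⟩)

private noncomputable def AG (n m : ℕ)
    (N : (Fin n → ℝ) → (((Fin n → ℝ) →L[ℝ] ℝ) [⋀^Fin m]→ₗ[ℝ] ℝ))
    (f : Fin (2 * m - 1) → ((Fin n → ℝ) → ℝ))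
    (σ : Equiv.Perm (Fin (2 * m - 1))) : Fin m → ((Fin n → ℝ) → ℝ) :=
  fun i : Fin m =>
    if _hi : (i : ℕ) = 0 then
      mvBracket N (fun k : Fin m => f (σ ⟨(k : ℕ), lt_of_lt_of_le k.isLt (by omega)⟩))
    else f (σ ⟨m - 1 + (i : ℕ), by have hi := i.isLt; omega⟩)

private noncomputable def AB (n m : ℕ)
    (N : (Fin n → ℝ) → (((Fin n → ℝ) →L[ℝ] ℝ) [⋀^Fin m]→ₗ[ℝ] ℝ))
    (f : Fin (2 * m - 1) → ((Fin n → ℝ) → ℝ))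
    (σ : Equiv.Perm (Fin (2 * m - 1))) : Fin m → ((Fin n → ℝ) → ℝ) :=
  fun i : Fin m =>
    if hi : (i : ℕ) < m - 1 then f (σ ⟨m + (i : ℕ), by omega⟩)
    else mvBracket N (fun k : Fin m => f (σ ⟨(k : ℕ), by have := k.2; omega⟩))

private noncomputable def AC (n m : ℕ)
    (N : (Fin n → ℝ) → (((Fin n → ℝ) →L[ℝ] ℝ) [⋀^Fin m]→ₗ[ℝ] ℝ))
    (f : Fin (2 * m - 1) → ((Fin n → ℝ) → ℝ))
    (j : Fin m) (σ : Equiv.Perm (Fin (2 * m - 1))) : Fin m → ((Fin n → ℝ) → ℝ) :=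
  Function.update (fun k : Fin m => f (σ ⟨(k : ℕ), by have := k.2; omega⟩)) j
    (mvBracket N
      (fun i : Fin m =>
        if hi : (i : ℕ) < m - 1 then f (σ ⟨m + (i : ℕ), by omega⟩)
        else f (σ ⟨(j : ℕ), by have := j.2; omega⟩)))

private noncomputable def rho0 (m : ℕ) (hm : 1 ≤ m) : Equiv.Perm (Fin (2 * m - 1)) :=
  (Fin.cycleRange (⟨2 * m - 1 - 1, by omega⟩ : Fin (2 * m - 1))) ^ m

private noncomputable def rhoJ (m : ℕ) (j : Fin m) : Equiv.Perm (Fin (2 * m - 1)) :=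
  Fin.revPerm *
    (Fin.cycleRange (⟨2 * m - 2 - (j : ℕ), by have := j.2; omega⟩ : Fin (2 * m - 1)))⁻¹ *
    Fin.revPerm


/-- Let `N` be a smooth `m`-vector field on `ℝⁿ` with `n ≥ 1`,
`m ≥ 3`. If the induced `m`-ary bracket satisfies the fundamental identity
`{f₁, …, f_{m−1}, {g₁, …, g_m}} = ∑ⱼ {g₁, …, {f₁, …, f_{m−1}, gⱼ}, …, g_m}` for all
smooth functions (i.e. `N` is a Nambu–Poisson tensor of order `m ≥ 3`), then the bracket
satisfies the generalized Jacobi identity of order `m` (i.e. `N` is a generalized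
Poisson tensor). -/
theorem statement10 (n m : ℕ) (hn : 1 ≤ n) (hm : 3 ≤ m)
    (N : (Fin n → ℝ) → (((Fin n → ℝ) →L[ℝ] ℝ) [⋀^Fin m]→ₗ[ℝ] ℝ))
    (hN : ∀ φ : Fin m → ((Fin n → ℝ) →L[ℝ] ℝ), ContDiff ℝ (⊤ : ℕ∞) (fun x => N x φ))
    (hFI : ∀ f : Fin (m - 1) → ((Fin n → ℝ) → ℝ), (∀ i, ContDiff ℝ (⊤ : ℕ∞) (f i)) →
      ∀ g : Fin m → ((Fin n → ℝ) → ℝ), (∀ j, ContDiff ℝ (⊤ : ℕ∞) (g j)) → ∀ x,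
        mvBracket N
            (fun i : Fin m =>
              if hi : (i : ℕ) < m - 1 then f ⟨(i : ℕ), hi⟩ else mvBracket N g) x
          = ∑ j : Fin m,
              mvBracket N
                (Function.update g j
                  (mvBracket N
                    (fun i : Fin m =>
                      if hi : (i : ℕ) < m - 1 then f ⟨(i : ℕ), hi⟩ else g j))) x) :
    GJI n m (mvBracket N) := by
  intro f hf x
  have hm1 : (1 : ℕ) ≤ m := by omega
  have pfm : m - 1 < m := by omega
  -- rotation action
  have hrot : ∀ y : Fin (2 * m - 1),
      (((rho0 m hm1) y : Fin (2 * m - 1)) : ℕ)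
        = if (y : ℕ) + m < 2 * m - 1 then (y : ℕ) + m else (y : ℕ) + m - (2 * m - 1) :=
    fun y => rot_pow (by omega) m (by omega) y
  have hP0 : ∀ (y t : Fin (2 * m - 1)),
      ((t : ℕ) = (y : ℕ) + m ∨ (t : ℕ) + (2 * m - 1) = (y : ℕ) + m) → (rho0 m hm1) y = t := by
    intro y t h
    apply Fin.ext
    rw [hrot y]
    have := y.2; have := t.2
    split_ifs <;> omega
  have hPj : ∀ (j : Fin m) (y t : Fin (2 * m - 1)),
      (((y : ℕ) < (j : ℕ) ∧ (t : ℕ) = (y : ℕ)) ∨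
        ((j : ℕ) ≤ (y : ℕ) ∧ (y : ℕ) ≤ 2 * m - 3 ∧ (t : ℕ) = (y : ℕ) + 1) ∨
        ((y : ℕ) = 2 * m - 2 ∧ (t : ℕ) = (j : ℕ))) →
      (rhoJ m j) y = t := by
    intro j y t h
    apply revConj_apply
    apply Fin.ext
    rw [cr_val]
    have hy := y.2; have ht := t.2; have hj := j.2
    simp only [Fin.val_rev, Fin.val_mk]
    split_ifs <;> omega
  have hcr : ∀ (c v t : Fin m),
      (((v : ℕ) < (c : ℕ) ∧ (t : ℕ) = (v : ℕ) + 1) ∨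
        ((v : ℕ) = (c : ℕ) ∧ (t : ℕ) = 0) ∨
        ((c : ℕ) < (v : ℕ) ∧ (t : ℕ) = (v : ℕ))) → Fin.cycleRange c v = t := by
    intro c v t h
    apply Fin.ext
    rw [cr_val]
    have := v.2; have := t.2; have := c.2
    split_ifs <;> omega
  -- Wfun evaluation
  have hW0 : ∀ (τ : Equiv.Perm (Fin (2 * m - 1))) (v : Fin m), (v : ℕ) = 0 →
      Wfun n m N f τ v
        = mvBracket N (fun k : Fin m => f (τ ⟨m - 1 + (k : ℕ), by have := k.2; omega⟩)) := by
    intro τ v h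
    simp only [Wfun]
    rw [if_pos h]
  have hW1 : ∀ (τ : Equiv.Perm (Fin (2 * m - 1))) (v : Fin m), (v : ℕ) ≠ 0 →
      Wfun n m N f τ v = f (τ ⟨(v : ℕ) - 1, by have := v.2; omega⟩) := by
    intro τ v h
    simp only [Wfun]
    rw [if_neg h]
  -- the three function identities
  have hEA : ∀ σ : Equiv.Perm (Fin (2 * m - 1)),
      AG n m N f σ = Wfun n m N f (σ * rho0 m hm1) ∘ ⇑(1 : Equiv.Perm (Fin m)) := by
    intro σ
    funext i
    simp only [AG, Function.comp_apply, Equiv.Perm.coe_one, id_eq]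
    by_cases hi : (i : ℕ) = 0
    · rw [dif_pos hi, hW0 _ _ hi]
      refine congrArg (mvBracket N) (funext fun k => ?_)
      rw [Equiv.Perm.mul_apply]
      refine congrArg (fun z => f (σ z)) ?_
      refine (hP0 _ _ (Or.inr ?_)).symm
      simp only [Fin.val_mk]
      have := k.2; omega
    · rw [dif_neg hi, hW1 _ _ hi]
      rw [Equiv.Perm.mul_apply]
      refine congrArg (fun z => f (σ z)) ?_
      refine (hP0 _ _ (Or.inl ?_)).symm
      simp only [Fin.val_mk]
      have := i.2; omega
  have hEB : ∀ σ : Equiv.Perm (Fin (2 * m - 1)),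
      AB n m N f σ
        = Wfun n m N f (σ * rho0 m hm1) ∘ ⇑(Fin.cycleRange (⟨m - 1, pfm⟩ : Fin m)) := by
    intro σ
    funext i
    simp only [AB, Function.comp_apply]
    by_cases hi : (i : ℕ) < m - 1
    · rw [dif_pos hi]
      have hip : (i : ℕ) + 1 < m := by omega
      have hd : Fin.cycleRange (⟨m - 1, pfm⟩ : Fin m) i = ⟨(i : ℕ) + 1, hip⟩ :=
        hcr _ _ _ (Or.inl ⟨by simp only [Fin.val_mk]; omega, by simp only [Fin.val_mk]⟩)
      rw [hd, hW1 _ _ (by simp only [Fin.val_mk]; omega)]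
      rw [Equiv.Perm.mul_apply]
      refine congrArg (fun z => f (σ z)) ?_
      refine (hP0 _ _ (Or.inl ?_)).symm
      simp only [Fin.val_mk]
      omega
    · rw [dif_neg hi]
      have h0m : 0 < m := by omega
      have hd : Fin.cycleRange (⟨m - 1, pfm⟩ : Fin m) i = ⟨0, h0m⟩ :=
        hcr _ _ _ (Or.inr (Or.inl ⟨by simp only [Fin.val_mk]; have := i.2; omega,
          by simp only [Fin.val_mk]⟩))
      rw [hd, hW0 _ _ (by simp only [Fin.val_mk])]
      refine congrArg (mvBracket N) (funext fun k => ?_)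
      rw [Equiv.Perm.mul_apply]
      refine congrArg (fun z => f (σ z)) ?_
      refine (hP0 _ _ (Or.inr ?_)).symm
      simp only [Fin.val_mk]
      have := k.2; omega
  have hEC : ∀ (j : Fin m) (σ : Equiv.Perm (Fin (2 * m - 1))),
      AC n m N f j σ = Wfun n m N f (σ * rhoJ m j) ∘ ⇑(Fin.cycleRange j) := by
    intro j σ
    funext i
    have hjm := j.2
    have him := i.2
    simp only [AC, Function.comp_apply]
    rcases lt_trichotomy (i : ℕ) (j : ℕ) with h | h | h
    · rw [Function.update_of_ne (fun e => absurd (congrArg Fin.val e) (by omega))]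
      have hip : (i : ℕ) + 1 < m := by omega
      have hd : Fin.cycleRange j i = ⟨(i : ℕ) + 1, hip⟩ :=
        hcr _ _ _ (Or.inl ⟨by omega, by simp only [Fin.val_mk]⟩)
      rw [hd, hW1 _ _ (by simp only [Fin.val_mk]; omega)]
      rw [Equiv.Perm.mul_apply]
      refine congrArg (fun z => f (σ z)) ?_
      refine (hPj j _ _ (Or.inl ?_)).symm
      simp only [Fin.val_mk]
      refine ⟨?_, ?_⟩ <;> (try trivial) <;> omega
    · have hij : i = j := Fin.ext h
      subst hij
      rw [Function.update_self]
      have h0m : 0 < m := by omega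
      have hd : Fin.cycleRange i i = ⟨0, h0m⟩ :=
        hcr _ _ _ (Or.inr (Or.inl ⟨rfl, by simp only [Fin.val_mk]⟩))
      rw [hd, hW0 _ _ (by simp only [Fin.val_mk])]
      refine congrArg (mvBracket N) (funext fun k => ?_)
      have hkm := k.2
      rw [Equiv.Perm.mul_apply]
      by_cases hk : (k : ℕ) < m - 1
      · rw [dif_pos hk]
        refine congrArg (fun z => f (σ z)) ?_
        refine (hPj i _ _ (Or.inr (Or.inl ?_))).symm
        simp only [Fin.val_mk]
        refine ⟨?_, ?_, ?_⟩ <;> (try trivial) <;> omega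
      · rw [dif_neg hk]
        refine congrArg (fun z => f (σ z)) ?_
        refine (hPj i _ _ (Or.inr (Or.inr ?_))).symm
        simp only [Fin.val_mk]
        refine ⟨?_, ?_⟩ <;> (try trivial) <;> omega
    · rw [Function.update_of_ne (fun e => absurd (congrArg Fin.val e) (by omega))]
      have hd : Fin.cycleRange j i = ⟨(i : ℕ), i.2⟩ :=
        hcr _ _ _ (Or.inr (Or.inr ⟨by omega, by simp only [Fin.val_mk]⟩))
      rw [hd, hW1 _ _ (by simp only [Fin.val_mk]; omega)]
      rw [Equiv.Perm.mul_apply]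
      refine congrArg (fun z => f (σ z)) ?_
      refine (hPj j _ _ (Or.inr (Or.inl ?_))).symm
      simp only [Fin.val_mk]
      refine ⟨?_, ?_, ?_⟩ <;> (try trivial) <;> omega
  -- sign computations
  have hsr0 : Equiv.Perm.sign (rho0 m hm1) = 1 := by
    show Equiv.Perm.sign ((Fin.cycleRange (⟨2 * m - 1 - 1, by omega⟩ : Fin (2 * m - 1))) ^ m) = 1
    rw [map_pow, Fin.sign_cycleRange]
    show ((-1 : ℤˣ) ^ (2 * m - 1 - 1)) ^ m = 1
    rw [Even.neg_one_pow ⟨m - 1, by omega⟩, one_pow]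
  have hcoefA : (((Equiv.Perm.sign (rho0 m hm1) : ℤ) : ℝ) *
      ((Equiv.Perm.sign (1 : Equiv.Perm (Fin m)) : ℤ) : ℝ)) = 1 := by
    rw [hsr0, Equiv.Perm.sign_one]
    norm_num
  have hcoefB : (((Equiv.Perm.sign (rho0 m hm1) : ℤ) : ℝ) *
      ((Equiv.Perm.sign (Fin.cycleRange (⟨m - 1, pfm⟩ : Fin m)) : ℤ) : ℝ))
        = (-1 : ℝ) ^ (m - 1) := by
    rw [hsr0, Fin.sign_cycleRange]
    show ((1 : ℤ) : ℝ) * ((((-1 : ℤˣ) ^ (m - 1) : ℤˣ) : ℤ) : ℝ) = (-1 : ℝ) ^ (m - 1)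
    rw [Units.val_pow_eq_pow_val]
    push_cast
    ring
  have hcoefC : ∀ j : Fin m,
      (((Equiv.Perm.sign (rhoJ m j) : ℤ) : ℝ) *
        ((Equiv.Perm.sign (Fin.cycleRange j) : ℤ) : ℝ)) = 1 := by
    intro j
    have hsj : Equiv.Perm.sign (rhoJ m j) = (-1 : ℤˣ) ^ (2 * m - 2 - (j : ℕ)) := by
      show Equiv.Perm.sign (Fin.revPerm *
        (Fin.cycleRange (⟨2 * m - 2 - (j : ℕ), by have := j.2; omega⟩ : Fin (2 * m - 1)))⁻¹ *
        Fin.revPerm) = _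
      rw [Equiv.Perm.sign_mul, Equiv.Perm.sign_mul, Equiv.Perm.sign_inv, Fin.sign_cycleRange]
      rw [mul_right_comm, Int.units_mul_self, one_mul]
    rw [hsj, Fin.sign_cycleRange]
    rw [Units.val_pow_eq_pow_val, Units.val_pow_eq_pow_val]
    push_cast
    rw [← pow_add]
    have he : 2 * m - 2 - (j : ℕ) + (j : ℕ) = 2 * (m - 1) := by have := j.2; omega
    rw [he, pow_mul]
    norm_num
  -- fundamental identity, instantiated
  have hH : ∀ σ : Equiv.Perm (Fin (2 * m - 1)),
      mvBracket N (AB n m N f σ) x = ∑ j : Fin m, mvBracket N (AC n m N f j σ) x := by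
    intro σ
    exact hFI (fun i' : Fin (m - 1) => f (σ ⟨m + (i' : ℕ), by have := i'.2; omega⟩))
      (fun _ => hf _)
      (fun k : Fin m => f (σ ⟨(k : ℕ), by have := k.2; omega⟩)) (fun _ => hf _) x
  -- main sums
  have h2 := sum_step N x (AB n m N f) (Wfun n m N f) (rho0 m hm1)
    (Fin.cycleRange (⟨m - 1, pfm⟩ : Fin m)) hEB
  have h3 : ∀ j : Fin m,
      (∑ σ : Equiv.Perm (Fin (2 * m - 1)),
        ((Equiv.Perm.sign σ : ℤ) : ℝ) * mvBracket N (AC n m N f j σ) x)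
      = ∑ τ : Equiv.Perm (Fin (2 * m - 1)),
          ((Equiv.Perm.sign τ : ℤ) : ℝ) * mvBracket N (Wfun n m N f τ) x := by
    intro j
    refine (sum_step N x (AC n m N f j) (Wfun n m N f) (rhoJ m j) (Fin.cycleRange j)
      (hEC j)).trans ?_
    rw [hcoefC j, one_mul]
  have e1 : (∑ σ : Equiv.Perm (Fin (2 * m - 1)),
      ((Equiv.Perm.sign σ : ℤ) : ℝ) * mvBracket N (AB n m N f σ) x)
      = (m : ℝ) * ∑ τ : Equiv.Perm (Fin (2 * m - 1)),
          ((Equiv.Perm.sign τ : ℤ) : ℝ) * mvBracket N (Wfun n m N f τ) x := by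
    calc (∑ σ : Equiv.Perm (Fin (2 * m - 1)),
        ((Equiv.Perm.sign σ : ℤ) : ℝ) * mvBracket N (AB n m N f σ) x)
        = ∑ σ : Equiv.Perm (Fin (2 * m - 1)), ∑ j : Fin m,
            ((Equiv.Perm.sign σ : ℤ) : ℝ) * mvBracket N (AC n m N f j σ) x :=
          Finset.sum_congr rfl (fun σ _ =>
            (congrArg (fun t => ((Equiv.Perm.sign σ : ℤ) : ℝ) * t) (hH σ)).trans
              (Finset.mul_sum _ _ _))
      _ = ∑ j : Fin m, ∑ σ : Equiv.Perm (Fin (2 * m - 1)),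
            ((Equiv.Perm.sign σ : ℤ) : ℝ) * mvBracket N (AC n m N f j σ) x :=
          Finset.sum_comm
      _ = ∑ _j : Fin m, ∑ τ : Equiv.Perm (Fin (2 * m - 1)),
            ((Equiv.Perm.sign τ : ℤ) : ℝ) * mvBracket N (Wfun n m N f τ) x :=
          Finset.sum_congr rfl (fun j _ => h3 j)
      _ = _ := by
          rw [Finset.sum_const, Finset.card_univ, Fintype.card_fin, nsmul_eq_mul]
  have hS0 : (∑ τ : Equiv.Perm (Fin (2 * m - 1)),
      ((Equiv.Perm.sign τ : ℤ) : ℝ) * mvBracket N (Wfun n m N f τ) x) = 0 := by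
    have e2 : (-1 : ℝ) ^ (m - 1) * (∑ τ : Equiv.Perm (Fin (2 * m - 1)),
        ((Equiv.Perm.sign τ : ℤ) : ℝ) * mvBracket N (Wfun n m N f τ) x)
        = (m : ℝ) * ∑ τ : Equiv.Perm (Fin (2 * m - 1)),
            ((Equiv.Perm.sign τ : ℤ) : ℝ) * mvBracket N (Wfun n m N f τ) x := by
      rw [← hcoefB, ← h2, e1]
    have hm3 : (3 : ℝ) ≤ (m : ℝ) := by exact_mod_cast hm
    rcases Nat.even_or_odd (m - 1) with he | he
    · rw [he.neg_one_pow, one_mul] at e2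
      nlinarith [e2]
    · rw [he.neg_one_pow] at e2
      nlinarith [e2]
  have h1 := sum_step N x (AG n m N f) (Wfun n m N f) (rho0 m hm1)
    (1 : Equiv.Perm (Fin m)) hEA
  exact h1.trans (by rw [hcoefA, one_mul]; exact hS0)
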